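/- Let s,x,y,t be complex numbers with sy+xt+1 = x^2+y^2 and let g be a function from triples (i,j,k) of nonnegative integers with i+j+k = n (n ≥ 4) to ℂ satisfying, for all valid indices: g_{i-2,j+2,k} = g_{i,j,k} + s·g_{i-1,j+1,k} + x·g_{i-1,j,k+1}; g_{i-2,j+1,k+1} = x·g_{i-1,j+1,k} + y·g_{i-1,j,k+1}; g_{i-2,j,k+2} = g_{i,j,k} + y·g_{i-1,j+1,k} + t·g_{i-1,j,k+1}. Define h on triples summing to n-2 by h_{i,j,k} = g_{i+2,j,k} + g_{i,j+2,k} + g_{i,j,k+2} (the color-contraction of g, i.e., merging two dangling edges within the same component). Then h also satisfies the same three linear recurrence relations with the same parameters s,x,y,t. -/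
import Mathlib


theorem stmt_10 (s x y t : ℂ) (hst : s*y + x*t + 1 = x^2 + y^2)
    (n : ℕ) (hn : 4 ≤ n) (g : ℕ → ℕ → ℕ → ℂ)
    (hg : ∀ i j k : ℕ, i + j + k + 2 = n →
      (g i (j+2) k = g (i+2) j k + s * g (i+1) (j+1) k + x * g (i+1) j (k+1)) ∧
      (g i (j+1) (k+1) = x * g (i+1) (j+1) k + y * g (i+1) j (k+1)) ∧
      (g i j (k+2) = g (i+2) j k + y * g (i+1) (j+1) k + t * g (i+1) j (k+1)))
    (h : ℕ → ℕ → ℕ → ℂ)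
    (hh : ∀ i j k : ℕ, h i j k = g (i+2) j k + g i (j+2) k + g i j (k+2)) :
    ∀ i j k : ℕ, i + j + k + 2 = n - 2 →
      (h i (j+2) k = h (i+2) j k + s * h (i+1) (j+1) k + x * h (i+1) j (k+1)) ∧
      (h i (j+1) (k+1) = x * h (i+1) (j+1) k + y * h (i+1) j (k+1)) ∧
      (h i j (k+2) = h (i+2) j k + y * h (i+1) (j+1) k + t * h (i+1) j (k+1)) := by
  intro i j k hsum
  have e1 := hg (i+2) j k (by omega)
  have e2 := hg i (j+2) k (by omega)
  have e3 := hg i j (k+2) (by omega)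
  refine ⟨?_, ?_, ?_⟩ <;> simp only [hh]
  · linear_combination e1.1 + e2.1 + e3.1
  · linear_combination e1.2.1 + e2.2.1 + e3.2.1
  · linear_combination e1.2.2 + e2.2.2 + e3.2.2
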